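/- arXiv:2305.01445 — 3 statements merged into one kernel-verified Lean document; each statement's English description precedes it below -/
import Mathlib

section
/- There exists a constant C > 0, depending only on T, p, C_{ℓ,2}, C_{ℓ,3}, C_{g,1}, C_{g,2} and C_A := max( sup_{t∈[0,T]} |A(t,0)| , L_A ), such that for every t ∈ [0,T] and x ∈ ℝ^d the value function satisfies −(T C_{ℓ,2} + C_{g,1}) ≤ v(t,x) ≤ C (1 + |x|^p). -/
open MeasureTheory Set intervalIntegral Filter

noncomputable section

/-- `γ` is the trajectory on `[t,T]` driven by the control `α`, starting from `x` at time `t`. -/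
def IsTrajectory (d r : ℕ) (T : ℝ) (A : ℝ → (Fin d → ℝ) → (Fin d → ℝ))
    (B : ℝ → ((Fin r → ℝ) →L[ℝ] (Fin d → ℝ)))
    (t : ℝ) (x : Fin d → ℝ) (α : ℝ → (Fin r → ℝ)) (γ : ℝ → (Fin d → ℝ)) : Prop :=
  ContinuousOn γ (Set.Icc t T) ∧
    ∀ s ∈ Set.Icc t T, γ s = x + ∫ u in t..s, (A u (γ u) + B u (α u))

/-- `α` is an admissible control on `[t,T]`: measurable with `∫_t^T |α(s)|^p ds < ∞`. -/
def IsControl (r : ℕ) (p T t : ℝ) (α : ℝ → (Fin r → ℝ)) : Prop :=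
  Measurable α ∧ IntegrableOn (fun s => ‖α s‖ ^ p) (Set.Icc t T)

/-- The set of costs `J^{t,x}(α)` achievable by admissible controls from `(t,x)`. -/
def CostSet (d r : ℕ) (T p : ℝ) (A : ℝ → (Fin d → ℝ) → (Fin d → ℝ))
    (B : ℝ → ((Fin r → ℝ) →L[ℝ] (Fin d → ℝ)))
    (ℓ : ℝ → (Fin r → ℝ) → (Fin d → ℝ) → ℝ) (g : (Fin d → ℝ) → ℝ)
    (t : ℝ) (x : Fin d → ℝ) : Set ℝ :=
  {c | ∃ (α : ℝ → (Fin r → ℝ)) (γ : ℝ → (Fin d → ℝ)),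
      IsControl r p T t α ∧ IsTrajectory d r T A B t x α γ ∧
      c = (∫ s in t..T, ℓ s (α s) (γ s)) + g (γ T)}

/-- The value function `v(t,x) = inf { J^{t,x}(α) : α ∈ L^p([t,T];ℝ^r) }`. -/
def value (d r : ℕ) (T p : ℝ) (A : ℝ → (Fin d → ℝ) → (Fin d → ℝ))
    (B : ℝ → ((Fin r → ℝ) →L[ℝ] (Fin d → ℝ)))
    (ℓ : ℝ → (Fin r → ℝ) → (Fin d → ℝ) → ℝ) (g : (Fin d → ℝ) → ℝ)
    (t : ℝ) (x : Fin d → ℝ) : ℝ :=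
  sInf (CostSet d r T p A B ℓ g t x)

/-! ### Auxiliary lemmas -/

section Aux

variable {E : Type*} [NormedAddCommGroup E] [NormedSpace ℝ E] [CompleteSpace E]

lemma gronwallBound_mono_time {δ K ε : ℝ} (hδ : 0 ≤ δ) (hK : 0 < K) (hε : 0 ≤ ε)
    {x y : ℝ} (hxy : x ≤ y) :
    gronwallBound δ K ε x ≤ gronwallBound δ K ε y := by
  simp only [gronwallBound_of_K_ne_0 hK.ne']
  have h1 : Real.exp (K * x) ≤ Real.exp (K * y) :=
    Real.exp_le_exp.2 (mul_le_mul_of_nonneg_left hxy hK.le)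
  have h2 : 0 ≤ ε / K := div_nonneg hε hK.le
  nlinarith

lemma le_gronwallBound_self {δ K ε : ℝ} (hδ : 0 ≤ δ) (hK : 0 < K) (hε : 0 ≤ ε)
    {x : ℝ} (hx : 0 ≤ x) : δ ≤ gronwallBound δ K ε x := by
  have := gronwallBound_mono_time hδ hK hε hx
  rwa [gronwallBound_x0] at this

/-- Global existence for a globally Lipschitz, linearly growing vector field, together with
the Grönwall a priori bound. -/
lemma exists_global_solution (v : ℝ → E → E) (a b : ℝ) (hab : a ≤ b)
    (hcont : ∀ y : E, ContinuousOn (fun t => v t y) (Set.Icc a b))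
    (L : ℝ) (hL : 0 < L)
    (hlip : ∀ t ∈ Set.Icc a b, ∀ x y : E, ‖v t x - v t y‖ ≤ L * ‖x - y‖)
    (K : ℝ) (hK : 0 ≤ K) (hgrow : ∀ t ∈ Set.Icc a b, ‖v t 0‖ ≤ K)
    (x : E) :
    ∃ γ : ℝ → E, γ a = x ∧
      (∀ s ∈ Set.Icc a b, HasDerivWithinAt γ (v s (γ s)) (Set.Icc a b) s) ∧
      (∀ s ∈ Set.Icc a b, ‖γ s‖ ≤ gronwallBound ‖x‖ L K (b - a)) := by
  have hvnorm : ∀ t ∈ Set.Icc a b, ∀ y : E, ‖v t y‖ ≤ L * ‖y‖ + K := by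
    intro t ht y
    have h1 : ‖v t y - v t 0‖ ≤ L * ‖y - 0‖ := hlip t ht y 0
    have h2 : ‖v t 0‖ ≤ K := hgrow t ht
    calc ‖v t y‖ = ‖(v t y - v t 0) + v t 0‖ := by rw [sub_add_cancel]
      _ ≤ ‖v t y - v t 0‖ + ‖v t 0‖ := norm_add_le _ _
      _ ≤ L * ‖y‖ + K := by rw [sub_zero] at h1; linarith
  set M : ℝ := gronwallBound ‖x‖ L K (b - a) with hM
  have hM0 : 0 ≤ M := le_trans (norm_nonneg x)
    (le_gronwallBound_self (norm_nonneg x) hL hK (by linarith))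
  -- any partial solution satisfies the Grönwall bound
  have key : ∀ c ∈ Set.Icc a b, ∀ γ : ℝ → E, γ a = x →
      (∀ s ∈ Set.Icc a c, HasDerivWithinAt γ (v s (γ s)) (Set.Icc a c) s) →
      ∀ s ∈ Set.Icc a c, ‖γ s‖ ≤ M := by
    intro c hc γ hγa hder s hs
    have hcont' : ContinuousOn γ (Set.Icc a c) := fun u hu => (hder u hu).continuousWithinAt
    have hbd := norm_le_gronwallBound_of_norm_deriv_right_le
      (f := γ) (f' := fun u => v u (γ u)) (δ := ‖x‖) (K := L) (ε := K) (a := a) (b := c)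
      hcont'
      (fun u hu => by
        have h1 : Set.Icc a c ∈ nhdsWithin u (Set.Ici u) := by
          refine Filter.mem_of_superset
            (inter_mem_nhdsWithin (Set.Ici u) (Iio_mem_nhds hu.2)) ?_
          exact fun z hz => ⟨le_trans hu.1 hz.1, le_of_lt hz.2⟩
        exact (hder u ⟨hu.1, hu.2.le⟩).mono_of_mem_nhdsWithin h1)
      (by rw [hγa])
      (fun u hu => hvnorm u ⟨hu.1, hu.2.le.trans hc.2⟩ (γ u))
      s hs
    refine hbd.trans ?_
    exact gronwallBound_mono_time (norm_nonneg x) hL hK (by cases hs; cases hc; linarith)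
  set C : ℝ := L * (M + 1) + K with hCdef
  have hC : 0 < C := by nlinarith
  set δ : ℝ := 1 / C with hδdef
  have hδ : 0 < δ := by positivity
  have main : ∀ n : ℕ, ∃ γ : ℝ → E, γ a = x ∧
      ∀ s ∈ Set.Icc a (min (a + n * δ) b),
        HasDerivWithinAt γ (v s (γ s)) (Set.Icc a (min (a + n * δ) b)) s := by
    intro n
    induction n with
    | zero =>
      refine ⟨fun _ => x, rfl, ?_⟩
      simp only [Nat.cast_zero, zero_mul, add_zero, min_eq_left hab]
      intro s hs
      rw [Set.Icc_self] at hs ⊢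
      rw [Set.mem_singleton_iff] at hs; subst hs
      exact hasDerivWithinAt_iff_hasFDerivWithinAt.mpr
        (HasFDerivWithinAt.of_not_accPt (by rw [accPt_principal_iff_nhdsWithin]; simp))
    | succ n ih =>
      obtain ⟨γ, hγa, hder⟩ := ih
      set c : ℝ := min (a + n * δ) b with hc
      set c' : ℝ := min (a + (n + 1 : ℕ) * δ) b with hc'
      have hnd : (n : ℝ) * δ ≤ ((n + 1 : ℕ) : ℝ) * δ := by
        push_cast; nlinarith
      have hac : a ≤ c := le_min (by nlinarith [hδ.le, Nat.cast_nonneg (α := ℝ) n]) hab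
      have hcb : c ≤ b := min_le_right _ _
      have hcc' : c ≤ c' := min_le_min (by linarith) le_rfl
      have hc'b : c' ≤ b := min_le_right _ _
      have hac' : a ≤ c' := hac.trans hcc'
      by_cases hcase : b ≤ a + n * δ
      · have h1 : c = b := min_eq_right hcase
        have h2 : c' = b := min_eq_right (by linarith)
        exact ⟨γ, hγa, by rw [h2, ← h1]; exact hder⟩
      · push_neg at hcase
        have h1 : c = a + n * δ := min_eq_left hcase.le
        have hbound : ‖γ c‖ ≤ M := key c ⟨hac, hcb⟩ γ hγa hder c ⟨hac, le_refl c⟩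
        have hsub : Set.Icc c c' ⊆ Set.Icc a b := Set.Icc_subset_Icc hac hc'b
        have hpl : IsPicardLindelof v (tmin := c) (tmax := c') ⟨c, le_refl c, hcc'⟩ (γ c)
            1 0 C.toNNReal L.toNNReal :=
          { lipschitzOnWith := fun t ht => LipschitzOnWith.of_dist_le_mul (fun y _ z _ => by
              rw [dist_eq_norm, dist_eq_norm, Real.coe_toNNReal L hL.le]
              exact hlip t (hsub ht) y z)
            continuousOn := fun y _ => (hcont y).mono hsub
            norm_le := fun t ht y hy => by
              rw [Real.coe_toNNReal C hC.le]
              have h1 : ‖y‖ ≤ ‖γ c‖ + 1 := by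
                have : ‖y - γ c‖ ≤ 1 := by simpa using mem_closedBall_iff_norm.mp hy
                calc ‖y‖ = ‖(y - γ c) + γ c‖ := by rw [sub_add_cancel]
                  _ ≤ ‖y - γ c‖ + ‖γ c‖ := norm_add_le _ _
                  _ ≤ ‖γ c‖ + 1 := by linarith
              have := hvnorm t (hsub ht) y
              have : ‖v t y‖ ≤ L * (‖γ c‖ + 1) + K := by nlinarith
              rw [hCdef]; nlinarith
            mul_max_le := by
              simp only [Real.coe_toNNReal C hC.le, NNReal.coe_one, NNReal.coe_zero, sub_zero]
              rw [sub_self, max_eq_left (by linarith : (0:ℝ) ≤ c' - c)]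
              have h2 : c' - c ≤ δ := by
                have h3 : c' ≤ a + ((n : ℝ) + 1) * δ := by
                  rw [hc']; push_cast; exact min_le_left _ _
                rw [h1]; linarith
              calc C * (c' - c) ≤ C * δ := by nlinarith
                _ = 1 := by rw [hδdef]; field_simp }
        obtain ⟨φ, hφc, hφder⟩ := hpl.exists_eq_forall_mem_Icc_hasDerivWithinAt₀
        set γ' : ℝ → E := fun s => if s ≤ c then γ s else φ s with hγ'
        have hIcc : Set.Icc a c ∪ Set.Icc c c' = Set.Icc a c' := Set.Icc_union_Icc_eq_Icc hac hcc'
        refine ⟨γ', by simp only [hγ', if_pos hac, hγa], ?_⟩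
        intro s hs
        have H1 : HasDerivWithinAt γ' (v s (γ' s)) (Set.Icc a c) s := by
          by_cases hsc : s ≤ c
          · have e : γ' s = γ s := if_pos hsc
            rw [e]
            exact (hder s ⟨hs.1, hsc⟩).congr (fun y hy => if_pos hy.2) e
          · refine hasDerivWithinAt_iff_hasFDerivWithinAt.mpr
              (HasFDerivWithinAt.of_notMem_closure ?_)
            rw [isClosed_Icc.closure_eq]
            exact fun h => hsc h.2
        have H2 : HasDerivWithinAt γ' (v s (γ' s)) (Set.Icc c c') s := by
          by_cases hsc : c ≤ s
          · have e : ∀ y ∈ Set.Icc c c', γ' y = φ y := by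
              intro y hy
              simp only [hγ']
              split_ifs with h
              · have : y = c := le_antisymm h hy.1
                rw [this, hφc]
              · rfl
            have e' : γ' s = φ s := e s ⟨hsc, hs.2⟩
            rw [e']
            exact (hφder s ⟨hsc, hs.2⟩).congr e e'
          · refine hasDerivWithinAt_iff_hasFDerivWithinAt.mpr
              (HasFDerivWithinAt.of_notMem_closure ?_)
            rw [isClosed_Icc.closure_eq]
            exact fun h => hsc h.1
        have := H1.union H2
        rwa [hIcc] at this
  obtain ⟨n, hn⟩ := exists_nat_ge ((b - a) / δ)
  have hnb : b ≤ a + n * δ := by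
    rw [div_le_iff₀ hδ] at hn; linarith
  obtain ⟨γ, hγa, hder⟩ := main n
  rw [min_eq_right hnb] at hder
  exact ⟨γ, hγa, hder, fun s hs => key b ⟨hab, le_refl b⟩ γ hγa hder s hs⟩

end Aux

set_option maxHeartbeats 2000000 in
/-- there is `C > 0` (independent of `t` and `x`) such that
`−(T C_{ℓ,2} + C_{g,1}) ≤ v(t,x) ≤ C (1 + |x|^p)` for all `t ∈ [0,T]`, `x ∈ ℝ^d`. -/
theorem statement6
    (d r : ℕ) (hd : 1 ≤ d) (hr : 1 ≤ r)
    (T : ℝ) (hT : 0 < T) (p : ℝ) (hp : 1 < p)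
    (A : ℝ → (Fin d → ℝ) → (Fin d → ℝ)) (B : ℝ → ((Fin r → ℝ) →L[ℝ] (Fin d → ℝ)))
    (hAcont : ContinuousOn (fun q : ℝ × (Fin d → ℝ) => A q.1 q.2) (Set.Icc 0 T ×ˢ Set.univ))
    (LA : ℝ) (hLA : 0 < LA)
    (hALip : ∀ t ∈ Set.Icc 0 T, ∀ x y : Fin d → ℝ, ‖A t x - A t y‖ ≤ LA * ‖x - y‖)
    (hBcont : ContinuousOn B (Set.Icc 0 T))
    (ℓ : ℝ → (Fin r → ℝ) → (Fin d → ℝ) → ℝ) (g : (Fin d → ℝ) → ℝ)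
    (hℓcont : ContinuousOn
      (fun q : ℝ × (Fin r → ℝ) × (Fin d → ℝ) => ℓ q.1 q.2.1 q.2.2)
      (Set.Icc 0 T ×ˢ (Set.univ : Set ((Fin r → ℝ) × (Fin d → ℝ)))))
    (hgcont : Continuous g)
    (Cl1 Cl2 Cl3 Cl4 Cg1 Cg2 Cg3 : ℝ)
    (hCl1 : 0 < Cl1) (hCl2 : 0 < Cl2) (hCl3 : 0 < Cl3) (hCl4 : 0 < Cl4)
    (hCg1 : 0 < Cg1) (hCg2 : 0 < Cg2) (hCg3 : 0 < Cg3)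
    (hl_lb : ∀ t ∈ Set.Icc 0 T, ∀ (a : Fin r → ℝ) (x : Fin d → ℝ),
      Cl1 * ‖a‖ ^ p - Cl2 ≤ ℓ t a x)
    (hl_ub : ∀ t ∈ Set.Icc 0 T, ∀ (a : Fin r → ℝ) (x : Fin d → ℝ),
      ℓ t a x ≤ Cl3 * (1 + ‖a‖ ^ p + ‖x‖ ^ p))
    (hl_lip : ∀ t ∈ Set.Icc 0 T, ∀ (a : Fin r → ℝ) (x y : Fin d → ℝ),
      |ℓ t a x - ℓ t a y| ≤ Cl4 * (1 + ‖x‖ ^ (p - 1) + ‖y‖ ^ (p - 1) + ‖a‖ ^ (p - 1)) * ‖x - y‖)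
    (hg_lb : ∀ x : Fin d → ℝ, -Cg1 ≤ g x)
    (hg_ub : ∀ x : Fin d → ℝ, g x ≤ Cg2 * (1 + ‖x‖ ^ p))
    (hg_lip : ∀ x y : Fin d → ℝ, |g x - g y| ≤ Cg3 * (1 + ‖x‖ ^ (p - 1) + ‖y‖ ^ (p - 1)) * ‖x - y‖) :
    ∃ C : ℝ, 0 < C ∧ ∀ t ∈ Set.Icc 0 T, ∀ x : Fin d → ℝ,
      -(T * Cl2 + Cg1) ≤ value d r T p A B ℓ g t x ∧
      value d r T p A B ℓ g t x ≤ C * (1 + ‖x‖ ^ p) := by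
  have hp0 : (0:ℝ) < p := lt_trans one_pos hp
  have hp0' : p ≠ 0 := hp0.ne'
  -- bound on ‖A t 0‖
  have hA0cont : ContinuousOn (fun t : ℝ => A t 0) (Set.Icc 0 T) := by
    have : ContinuousOn (fun t : ℝ => ((t, (0 : Fin d → ℝ)) : ℝ × (Fin d → ℝ))) (Set.Icc 0 T) :=
      (continuous_id.prodMk continuous_const).continuousOn
    exact hAcont.comp this (fun t ht => ⟨ht, Set.mem_univ _⟩)
  obtain ⟨K₀, hK₀⟩ := isCompact_Icc.exists_bound_of_continuousOn hA0cont
  set K : ℝ := max K₀ 0 with hKdef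
  have hK : 0 ≤ K := le_max_right _ _
  have hgrow : ∀ t ∈ Set.Icc 0 T, ‖A t 0‖ ≤ K := fun t ht => (hK₀ t ht).trans (le_max_left _ _)
  -- constants
  set a₀ : ℝ := Real.exp (LA * T) with ha₀
  set b₀ : ℝ := (K / LA) * Real.exp (LA * T) with hb₀
  have ha₀pos : 0 < a₀ := Real.exp_pos _
  have hb₀nn : 0 ≤ b₀ := mul_nonneg (div_nonneg hK hLA.le) (Real.exp_pos _).le
  set D₁ : ℝ := 2 ^ p * a₀ ^ p with hD₁
  set D₂ : ℝ := 2 ^ p * b₀ ^ p with hD₂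
  have hD₁nn : 0 ≤ D₁ := mul_nonneg (Real.rpow_nonneg (by norm_num) p) (Real.rpow_nonneg ha₀pos.le p)
  have hD₂nn : 0 ≤ D₂ := mul_nonneg (Real.rpow_nonneg (by norm_num) p) (Real.rpow_nonneg hb₀nn p)
  refine ⟨(T * Cl3 + Cg2) * (1 + D₁ + D₂), by positivity, ?_⟩
  intro t ht x
  have htT : t ≤ T := ht.2
  have ht0 : 0 ≤ t := ht.1
  -- the Grönwall bound and its polynomial estimate
  set Mx : ℝ := gronwallBound ‖x‖ LA K T with hMx
  have hMxnn : 0 ≤ Mx := le_trans (norm_nonneg x)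
    (le_gronwallBound_self (norm_nonneg x) hLA hK hT.le)
  have hMx_le : Mx ≤ a₀ * ‖x‖ + b₀ := by
    rw [hMx, gronwallBound_of_K_ne_0 hLA.ne']
    have h1 : Real.exp (LA * T) - 1 ≤ Real.exp (LA * T) := by linarith
    have h2 : 0 ≤ K / LA := div_nonneg hK hLA.le
    rw [ha₀, hb₀]
    nlinarith [norm_nonneg x, Real.exp_pos (LA * T)]
  have hMxp : Mx ^ p ≤ D₁ * ‖x‖ ^ p + D₂ := by
    have hax : 0 ≤ a₀ * ‖x‖ := mul_nonneg ha₀pos.le (norm_nonneg x)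
    have step1 : Mx ^ p ≤ (a₀ * ‖x‖ + b₀) ^ p :=
      Real.rpow_le_rpow hMxnn hMx_le hp0.le
    have step2 : (a₀ * ‖x‖ + b₀) ^ p ≤ (2 * max (a₀ * ‖x‖) b₀) ^ p := by
      refine Real.rpow_le_rpow (by positivity) ?_ hp0.le
      rcases le_total (a₀ * ‖x‖) b₀ with h | h
      · rw [max_eq_right h]; linarith
      · rw [max_eq_left h]; linarith
    have step3 : (2 * max (a₀ * ‖x‖) b₀) ^ p = 2 ^ p * (max (a₀ * ‖x‖) b₀) ^ p :=
      Real.mul_rpow (by norm_num) (le_max_of_le_right hb₀nn)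
    have step4 : (max (a₀ * ‖x‖) b₀) ^ p ≤ (a₀ * ‖x‖) ^ p + b₀ ^ p := by
      rcases max_cases (a₀ * ‖x‖) b₀ with ⟨h, _⟩ | ⟨h, _⟩ <;> rw [h]
      · nlinarith [Real.rpow_nonneg hb₀nn p]
      · nlinarith [Real.rpow_nonneg hax p]
    have step5 : (a₀ * ‖x‖) ^ p = a₀ ^ p * ‖x‖ ^ p := Real.mul_rpow ha₀pos.le (norm_nonneg x)
    calc Mx ^ p ≤ (2 * max (a₀ * ‖x‖) b₀) ^ p := step1.trans step2
      _ = 2 ^ p * (max (a₀ * ‖x‖) b₀) ^ p := step3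
      _ ≤ 2 ^ p * ((a₀ * ‖x‖) ^ p + b₀ ^ p) := by
          have h2p : (0:ℝ) ≤ 2 ^ p := Real.rpow_nonneg (by norm_num) p
          nlinarith [step4]
      _ = D₁ * ‖x‖ ^ p + D₂ := by rw [hD₁, hD₂, step5]; ring
  -- existence of an uncontrolled trajectory
  have hsub0T : Set.Icc t T ⊆ Set.Icc 0 T := Set.Icc_subset_Icc ht0 le_rfl
  obtain ⟨γ, hγt, hder, hbnd⟩ := exists_global_solution (E := Fin d → ℝ) A t T htT
    (fun y => by
      have : ContinuousOn (fun s : ℝ => ((s, y) : ℝ × (Fin d → ℝ))) (Set.Icc t T) :=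
        (continuous_id.prodMk continuous_const).continuousOn
      exact (hAcont.comp this (fun s hs => ⟨hsub0T hs, Set.mem_univ _⟩)))
    LA hLA
    (fun s hs y z => hALip s (hsub0T hs) y z)
    K hK (fun s hs => hgrow s (hsub0T hs)) x
  have hbnd' : ∀ s ∈ Set.Icc t T, ‖γ s‖ ≤ Mx := by
    intro s hs
    refine (hbnd s hs).trans ?_
    exact gronwallBound_mono_time (norm_nonneg x) hLA hK (by linarith)
  have hγcont : ContinuousOn γ (Set.Icc t T) := fun u hu => (hder u hu).continuousWithinAt
  have hAγcont : ContinuousOn (fun u : ℝ => A u (γ u)) (Set.Icc t T) := by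
    have : ContinuousOn (fun u : ℝ => ((u, γ u) : ℝ × (Fin d → ℝ))) (Set.Icc t T) :=
      continuousOn_id.prodMk hγcont
    exact hAcont.comp this (fun u hu => ⟨hsub0T hu, Set.mem_univ _⟩)
  -- trajectory in integral form, with zero control
  have htraj : IsTrajectory d r T A B t x (fun _ => 0) γ := by
    refine ⟨hγcont, fun s hs => ?_⟩
    have hint : IntervalIntegrable (fun u : ℝ => A u (γ u)) volume t s := by
      have h := hAγcont.mono (Set.Icc_subset_Icc le_rfl hs.2)
      rw [← Set.uIcc_of_le hs.1] at h
      exact h.intervalIntegrable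
    have hftc : (∫ u in t..s, A u (γ u)) = γ s - γ t := by
      refine integral_eq_sub_of_hasDeriv_right_of_le hs.1
        (hγcont.mono (Set.Icc_subset_Icc le_rfl hs.2)) ?_ hint
      intro u hu
      have hmem : Set.Icc t T ∈ nhds u := Icc_mem_nhds hu.1 (lt_of_lt_of_le hu.2 hs.2)
      exact ((hder u ⟨hu.1.le, hu.2.le.trans hs.2⟩).hasDerivAt hmem).hasDerivWithinAt
    have : (∫ u in t..s, (A u (γ u) + B u 0)) = ∫ u in t..s, A u (γ u) := by
      simp only [map_zero, add_zero]
    rw [this, hftc, hγt]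
    abel
  have hctrl : IsControl r p T t (fun _ => (0 : Fin r → ℝ)) := by
    refine ⟨measurable_const, ?_⟩
    have : (fun s : ℝ => ‖(0 : Fin r → ℝ)‖ ^ p) = fun _ : ℝ => (0:ℝ) := by
      funext s; rw [norm_zero, Real.zero_rpow hp0']
    rw [this]
    exact integrableOn_const measure_Icc_lt_top.ne
  -- cost of the zero control
  have hℓγcont : ContinuousOn (fun s : ℝ => ℓ s (0 : Fin r → ℝ) (γ s)) (Set.Icc t T) := by
    have : ContinuousOn (fun s : ℝ =>
        ((s, (0 : Fin r → ℝ), γ s) : ℝ × (Fin r → ℝ) × (Fin d → ℝ))) (Set.Icc t T) :=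
      continuousOn_id.prodMk (continuousOn_const.prodMk hγcont)
    exact hℓcont.comp this (fun s hs => ⟨hsub0T hs, Set.mem_univ _⟩)
  have hℓint : IntervalIntegrable (fun s : ℝ => ℓ s (0 : Fin r → ℝ) (γ s)) volume t T := by
    have h := hℓγcont
    rw [← Set.uIcc_of_le htT] at h
    exact h.intervalIntegrable
  have hcost : (∫ s in t..T, ℓ s (0 : Fin r → ℝ) (γ s)) + g (γ T)
      ≤ (T * Cl3 + Cg2) * (1 + D₁ + D₂) * (1 + ‖x‖ ^ p) := by
    have hbd1 : ∀ s ∈ Set.Icc t T, ℓ s (0 : Fin r → ℝ) (γ s) ≤ Cl3 * (1 + Mx ^ p) := by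
      intro s hs
      have h1 := hl_ub s (hsub0T hs) 0 (γ s)
      have h2 : ‖(0 : Fin r → ℝ)‖ ^ p = 0 := by rw [norm_zero, Real.zero_rpow hp0']
      have h3 : ‖γ s‖ ^ p ≤ Mx ^ p :=
        Real.rpow_le_rpow (norm_nonneg _) (hbnd' s hs) hp0.le
      rw [h2] at h1
      nlinarith
    have hI : (∫ s in t..T, ℓ s (0 : Fin r → ℝ) (γ s)) ≤ (T - t) * (Cl3 * (1 + Mx ^ p)) := by
      have := integral_mono_on (μ := volume) (a := t) (b := T)
        (f := fun s => ℓ s (0 : Fin r → ℝ) (γ s)) (g := fun _ => Cl3 * (1 + Mx ^ p))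
        htT hℓint intervalIntegrable_const hbd1
      rwa [intervalIntegral.integral_const, smul_eq_mul] at this
    have hgT : g (γ T) ≤ Cg2 * (1 + Mx ^ p) := by
      have h1 := hg_ub (γ T)
      have h3 : ‖γ T‖ ^ p ≤ Mx ^ p :=
        Real.rpow_le_rpow (norm_nonneg _) (hbnd' T ⟨htT, le_refl T⟩) hp0.le
      nlinarith
    have hMp : 1 + Mx ^ p ≤ (1 + D₁ + D₂) * (1 + ‖x‖ ^ p) := by
      have hxp : 0 ≤ ‖x‖ ^ p := Real.rpow_nonneg (norm_nonneg x) p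
      nlinarith [hMxp]
    have hpos : 0 ≤ 1 + Mx ^ p := by positivity
    have h4 : (T - t) * (Cl3 * (1 + Mx ^ p)) ≤ T * Cl3 * (1 + Mx ^ p) := by
      nlinarith [mul_nonneg ht0 (mul_nonneg hCl3.le hpos)]
    calc (∫ s in t..T, ℓ s (0 : Fin r → ℝ) (γ s)) + g (γ T)
        ≤ T * Cl3 * (1 + Mx ^ p) + Cg2 * (1 + Mx ^ p) := by linarith
      _ = (T * Cl3 + Cg2) * (1 + Mx ^ p) := by ring
      _ ≤ (T * Cl3 + Cg2) * ((1 + D₁ + D₂) * (1 + ‖x‖ ^ p)) := by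
          have : 0 < T * Cl3 + Cg2 := by positivity
          nlinarith
      _ = (T * Cl3 + Cg2) * (1 + D₁ + D₂) * (1 + ‖x‖ ^ p) := by ring
  have hmem : ((∫ s in t..T, ℓ s (0 : Fin r → ℝ) (γ s)) + g (γ T))
      ∈ CostSet d r T p A B ℓ g t x := ⟨fun _ => 0, γ, hctrl, htraj, rfl⟩
  -- lower bound for all costs
  have hlb : ∀ c ∈ CostSet d r T p A B ℓ g t x, -(T * Cl2 + Cg1) ≤ c := by
    rintro c ⟨α, γ', hctrl', htraj', rfl⟩
    have h2 : -Cg1 ≤ g (γ' T) := hg_lb _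
    have h1 : -(T * Cl2) ≤ ∫ s in t..T, ℓ s (α s) (γ' s) := by
      by_cases hI : IntervalIntegrable (fun s => ℓ s (α s) (γ' s)) volume t T
      · have hmono : (∫ s in t..T, (-Cl2 : ℝ)) ≤ ∫ s in t..T, ℓ s (α s) (γ' s) := by
          refine integral_mono_on htT intervalIntegrable_const hI (fun s hs => ?_)
          have h3 := hl_lb s (hsub0T hs) (α s) (γ' s)
          have h4 : 0 ≤ Cl1 * ‖α s‖ ^ p :=
            mul_nonneg hCl1.le (Real.rpow_nonneg (norm_nonneg _) p)
          linarith
        rw [intervalIntegral.integral_const, smul_eq_mul] at hmono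
        nlinarith
      · rw [intervalIntegral.integral_undef hI]
        nlinarith
    linarith
  have hne : (CostSet d r T p A B ℓ g t x).Nonempty := ⟨_, hmem⟩
  have hbdd : BddBelow (CostSet d r T p A B ℓ g t x) :=
    ⟨-(T * Cl2 + Cg1), fun c hc => hlb c hc⟩
  constructor
  · exact le_csInf hne (fun c hc => hlb c hc)
  · exact (csInf_le hbdd hmem).trans hcost
end
end

section
/- There exists a constant C̃ > 0, depending only on T, p, C_{ℓ,1}, C_{ℓ,2}, C_{ℓ,3}, C_{g,1}, C_{g,2} and C_A := max( sup_{t∈[0,T]} |A(t,0)| , L_A ), such that for every t ∈ [0,T] and x ∈ ℝ^d, every optimal control α* ∈ L^p([t,T];ℝ^r) (i.e. one with J^{t,x}(α*) = v(t,x)) satisfies ( ∫_t^T |α*(s)|^p ds )^{1/p} ≤ C̃ (1 + |x|). -/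
open MeasureTheory Set intervalIntegral Filter

noncomputable section
open Metric

lemma myHasDerivWithinAt_of_nmem_closure {E : Type*} [NormedAddCommGroup E] [NormedSpace ℝ E]
    {g : ℝ → E} {s : Set ℝ} {x : ℝ} (h : x ∉ closure s) (c : E) :
    HasDerivWithinAt g c s x :=
  ((HasFDerivWithinAt.of_notMem_closure h :
    HasFDerivWithinAt g (ContinuousLinearMap.smulRight (1 : ℝ →L[ℝ] ℝ) c) s x)).hasDerivWithinAt.congr_deriv
    (by simp)

lemma exists_global_ode_solution {E : Type*} [NormedAddCommGroup E] [NormedSpace ℝ E]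
    [CompleteSpace E]
    (f : ℝ → E → E) (hf : Continuous fun q : ℝ × E => f q.1 q.2)
    (L : ℝ) (hL : 0 < L) (hLip : ∀ s : ℝ, ∀ x y : E, ‖f s x - f s y‖ ≤ L * ‖x - y‖)
    (C₀ : ℝ) (hC₀ : 0 ≤ C₀) (hfb : ∀ s : ℝ, ‖f s 0‖ ≤ C₀)
    (h : ℝ) (hh : 0 < h) (hh1 : (C₀ + 2 * L) * h ≤ 1)
    (b : ℝ) :
    ∀ n : ℕ, ∀ t₀ : ℝ, t₀ ≤ b → b - t₀ ≤ n * h → ∀ x₀ : E,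
      ∃ γ : ℝ → E, γ t₀ = x₀ ∧
        ∀ s ∈ Icc t₀ b, HasDerivWithinAt γ (f s (γ s)) (Icc t₀ b) s := by
  -- local Picard–Lindelöf step
  have key : ∀ t₀ t₁ : ℝ, t₀ ≤ t₁ → t₁ ≤ t₀ + h → ∀ x₀ : E,
      ∃ γ : ℝ → E, γ t₀ = x₀ ∧
        ∀ s ∈ Icc t₀ t₁, HasDerivWithinAt γ (f s (γ s)) (Icc t₀ t₁) s := by
    intro t₀ t₁ h01 h1h x₀
    have hx₀ : (0:ℝ) ≤ 1 + ‖x₀‖ := by positivity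
    have hpl : IsPicardLindelof f (tmin := t₀) (tmax := t₁) ⟨t₀, le_refl _, h01⟩ x₀
        ⟨1 + ‖x₀‖, hx₀⟩ 0 ⟨C₀ + L * (‖x₀‖ + (1 + ‖x₀‖)), by positivity⟩ L.toNNReal := by
      refine ⟨?_, ?_, ?_, ?_⟩
      · intro t _
        rw [lipschitzOnWith_iff_dist_le_mul]
        intro x _ y _
        rw [dist_eq_norm, dist_eq_norm, Real.coe_toNNReal _ hL.le]
        exact hLip t x y
      · intro x _
        exact (hf.comp (continuous_id.prodMk continuous_const)).continuousOn
      · intro t _ x hx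
        show ‖f t x‖ ≤ C₀ + L * (‖x₀‖ + (1 + ‖x₀‖))
        have h1 : ‖x‖ ≤ ‖x₀‖ + (1 + ‖x₀‖) := by
          have h2 : ‖x - x₀‖ ≤ 1 + ‖x₀‖ := mem_closedBall_iff_norm.mp hx
          have h3 : ‖x‖ ≤ ‖x - x₀‖ + ‖x₀‖ := by
            have := norm_add_le (x - x₀) x₀; simpa using this
          linarith
        calc ‖f t x‖ ≤ ‖f t 0‖ + ‖f t x - f t 0‖ := by
              have := norm_add_le (f t 0) (f t x - f t 0); simpa using this
        _ ≤ C₀ + L * ‖x - 0‖ := add_le_add (hfb t) (hLip t x 0)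
        _ ≤ C₀ + L * (‖x₀‖ + (1 + ‖x₀‖)) := by
              have : ‖x - 0‖ = ‖x‖ := by simp
              rw [this]; nlinarith
      · have hmax : max (t₁ - t₀) (t₀ - t₀) ≤ h := by
          apply max_le (by linarith) (by linarith)
        have hCpos : (0:ℝ) ≤ C₀ + L * (‖x₀‖ + (1 + ‖x₀‖)) := by positivity
        show (C₀ + L * (‖x₀‖ + (1 + ‖x₀‖))) * max (t₁ - t₀) (t₀ - t₀) ≤ 1 + ‖x₀‖ - 0
        rw [sub_zero]
        calc (C₀ + L * (‖x₀‖ + (1 + ‖x₀‖))) * max (t₁ - t₀) (t₀ - t₀)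
            ≤ (C₀ + L * (‖x₀‖ + (1 + ‖x₀‖))) * h := by
              exact mul_le_mul_of_nonneg_left hmax hCpos
        _ ≤ ((C₀ + 2 * L) * (1 + ‖x₀‖)) * h := by
              have hC : C₀ + L * (‖x₀‖ + (1 + ‖x₀‖)) ≤ (C₀ + 2 * L) * (1 + ‖x₀‖) := by
                nlinarith [norm_nonneg x₀, hC₀, hL.le]
              exact mul_le_mul_of_nonneg_right hC hh.le
        _ = ((C₀ + 2 * L) * h) * (1 + ‖x₀‖) := by ring
        _ ≤ 1 * (1 + ‖x₀‖) := mul_le_mul_of_nonneg_right hh1 hx₀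
        _ = 1 + ‖x₀‖ := one_mul _
    exact hpl.exists_eq_forall_mem_Icc_hasDerivWithinAt₀
  intro n
  induction n with
  | zero =>
    intro t₀ h0b hb0 x₀
    have hb : b ≤ t₀ := by
      have : b - t₀ ≤ 0 := by simpa using hb0
      linarith
    exact key t₀ b h0b (by linarith) x₀
  | succ n ih =>
    intro t₀ h0b hb0 x₀
    by_cases hbig : b ≤ t₀ + h
    · exact key t₀ b h0b hbig x₀
    · push_neg at hbig
      set t₁ := t₀ + h with ht₁
      obtain ⟨γ1, hγ10, hγ1d⟩ := key t₀ t₁ (by linarith) le_rfl x₀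
      obtain ⟨γ2, hγ20, hγ2d⟩ := ih t₁ hbig.le (by
        rw [ht₁]
        have h5 := hb0
        push_cast at h5
        linarith) (γ1 t₁)
      refine ⟨fun s => if s ≤ t₁ then γ1 s else γ2 s, by
        have ht01 : t₀ ≤ t₁ := by rw [ht₁]; linarith
        simp only [if_pos ht01]; exact hγ10, ?_⟩
      have hEq1 : ∀ y ∈ Icc t₀ t₁, (if y ≤ t₁ then γ1 y else γ2 y) = γ1 y := by
        intro y hy; rw [if_pos hy.2]
      have hEq2 : ∀ y ∈ Icc t₁ b, (if y ≤ t₁ then γ1 y else γ2 y) = γ2 y := by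
        intro y hy
        by_cases hyt : y ≤ t₁
        · have : y = t₁ := le_antisymm hyt hy.1
          rw [if_pos hyt, this, hγ20]
        · rw [if_neg hyt]
      intro s hs
      have hIcc : Icc t₀ t₁ ∪ Icc t₁ b = Icc t₀ b :=
        Icc_union_Icc_eq_Icc (by linarith) hbig.le
      rw [← hIcc]
      by_cases hst : s ≤ t₁
      · have hs1 : s ∈ Icc t₀ t₁ := ⟨hs.1, hst⟩
        have D1 : HasDerivWithinAt (fun s => if s ≤ t₁ then γ1 s else γ2 s)
            (f s ((fun s => if s ≤ t₁ then γ1 s else γ2 s) s)) (Icc t₀ t₁) s := by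
          have := (hγ1d s hs1).congr hEq1 (hEq1 s hs1)
          simpa only [hEq1 s hs1] using this
        by_cases hseq : s = t₁
        · have hs2 : s ∈ Icc t₁ b := by rw [hseq]; exact ⟨le_refl _, hbig.le⟩
          have D2 : HasDerivWithinAt (fun s => if s ≤ t₁ then γ1 s else γ2 s)
              (f s ((fun s => if s ≤ t₁ then γ1 s else γ2 s) s)) (Icc t₁ b) s := by
            have := (hγ2d s hs2).congr hEq2 (hEq2 s hs2)
            simpa only [hEq2 s hs2] using this
          exact D1.union D2
        · have hslt : s < t₁ := lt_of_le_of_ne hst hseq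
          have D2 : HasDerivWithinAt (fun s => if s ≤ t₁ then γ1 s else γ2 s)
              (f s ((fun s => if s ≤ t₁ then γ1 s else γ2 s) s)) (Icc t₁ b) s := by
            refine myHasDerivWithinAt_of_nmem_closure ?_ _
            rw [closure_Icc]
            exact fun hmem => absurd hmem.1 (not_le.mpr hslt)
          exact D1.union D2
      · push_neg at hst
        have hs2 : s ∈ Icc t₁ b := ⟨hst.le, hs.2⟩
        have D2 : HasDerivWithinAt (fun s => if s ≤ t₁ then γ1 s else γ2 s)
            (f s ((fun s => if s ≤ t₁ then γ1 s else γ2 s) s)) (Icc t₁ b) s := by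
          have := (hγ2d s hs2).congr hEq2 (hEq2 s hs2)
          simpa only [hEq2 s hs2] using this
        have D1 : HasDerivWithinAt (fun s => if s ≤ t₁ then γ1 s else γ2 s)
            (f s ((fun s => if s ≤ t₁ then γ1 s else γ2 s) s)) (Icc t₀ t₁) s := by
          refine myHasDerivWithinAt_of_nmem_closure ?_ _
          rw [closure_Icc]
          exact fun hmem => absurd hmem.2 (not_le.mpr hst)
        exact D1.union D2


/-- Existence of a globally defined solution of the uncontrolled ODE, with linear growth bound. -/
lemma exists_zero_trajectory {d : ℕ} {T : ℝ} (hT : 0 < T)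
    {A : ℝ → (Fin d → ℝ) → (Fin d → ℝ)}
    (hAcont : ContinuousOn (fun q : ℝ × (Fin d → ℝ) => A q.1 q.2) (Set.Icc 0 T ×ˢ Set.univ))
    {LA : ℝ} (hLA : 0 < LA)
    (hALip : ∀ t ∈ Set.Icc 0 T, ∀ x y : Fin d → ℝ, ‖A t x - A t y‖ ≤ LA * ‖x - y‖) :
    ∃ K₀ : ℝ, 0 < K₀ ∧ ∀ t ∈ Set.Icc 0 T, ∀ x : Fin d → ℝ,
      ∃ γ : ℝ → (Fin d → ℝ), ContinuousOn γ (Set.Icc t T) ∧ γ t = x ∧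
        (∀ s ∈ Set.Icc t T, γ s = x + ∫ u in t..s, A u (γ u)) ∧
        (∀ s ∈ Set.Icc t T, ‖γ s‖ ≤ K₀ * (1 + ‖x‖)) := by
  -- the clamp function
  set cl : ℝ → ℝ := fun s => max 0 (min s T) with hcl
  have hclmem : ∀ s, cl s ∈ Set.Icc 0 T :=
    fun s => ⟨le_max_left _ _, max_le hT.le (min_le_right _ _)⟩
  have hclcont : Continuous cl := continuous_const.max (continuous_id.min continuous_const)
  set Ae : ℝ → (Fin d → ℝ) → (Fin d → ℝ) := fun s y => A (cl s) y with hAe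
  have hAecont : Continuous (fun q : ℝ × (Fin d → ℝ) => Ae q.1 q.2) := by
    have hinner : Continuous (fun q : ℝ × (Fin d → ℝ) => ((cl q.1, q.2) : ℝ × (Fin d → ℝ))) :=
      (hclcont.comp continuous_fst).prodMk continuous_snd
    exact hAcont.comp_continuous hinner (fun q => ⟨hclmem q.1, mem_univ _⟩)
  have hAelip : ∀ s : ℝ, ∀ x y : Fin d → ℝ, ‖Ae s x - Ae s y‖ ≤ LA * ‖x - y‖ :=
    fun s x y => hALip (cl s) (hclmem s) x y
  -- bound on ‖A u 0‖
  obtain ⟨C₀, hC₀b⟩ : ∃ C₀, ∀ u ∈ Set.Icc 0 T, ‖A u 0‖ ≤ C₀ := by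
    have hcont0 : ContinuousOn (fun u : ℝ => A u 0) (Set.Icc 0 T) := by
      have hinner : ContinuousOn (fun u : ℝ => ((u, 0) : ℝ × (Fin d → ℝ))) (Set.Icc 0 T) :=
        (continuousOn_id).prodMk continuousOn_const
      exact hAcont.comp hinner (fun u hu => ⟨hu, mem_univ _⟩)
    exact IsCompact.exists_bound_of_continuousOn isCompact_Icc hcont0
  set C₁ : ℝ := max C₀ 0 with hC₁
  have hC₁0 : 0 ≤ C₁ := le_max_right _ _
  have hAe0 : ∀ s : ℝ, ‖Ae s 0‖ ≤ C₁ :=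
    fun s => le_trans (hC₀b (cl s) (hclmem s)) (le_max_left _ _)
  -- step size
  set h : ℝ := (C₁ + 2 * LA + 1)⁻¹ with hh_def
  have hh : 0 < h := by rw [hh_def]; positivity
  have hh1 : (C₁ + 2 * LA) * h ≤ 1 := by
    rw [hh_def, ← div_eq_mul_inv]
    exact div_le_one_of_le₀ (by linarith) (by positivity)
  set K₀ : ℝ := (1 + C₁ / LA) * Real.exp (LA * T) with hK₀
  have hK₀pos : 0 < K₀ := by
    apply mul_pos (by positivity) (Real.exp_pos _)
  refine ⟨K₀, hK₀pos, ?_⟩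
  intro t ht x
  have htT : t ≤ T := ht.2
  set n : ℕ := ⌈T / h⌉₊ with hn
  have hbn : T - t ≤ n * h := by
    have h1 : T / h ≤ (n : ℝ) := Nat.le_ceil _
    have h2 : T = T / h * h := by field_simp
    nlinarith [ht.1, hh]
  obtain ⟨γ, hγ0, hγd⟩ := exists_global_ode_solution Ae hAecont LA hLA hAelip C₁ hC₁0 hAe0
    h hh hh1 T n t htT hbn x
  have hγc : ContinuousOn γ (Set.Icc t T) := fun s hs => (hγd s hs).continuousWithinAt
  have hcl_eq : ∀ s ∈ Set.Icc t T, cl s = s := by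
    intro s hs
    simp only [hcl]
    rw [min_eq_left hs.2, max_eq_right (le_trans ht.1 hs.1)]
  -- Gronwall bound
  have hIci : ∀ s ∈ Set.Ico t T, HasDerivWithinAt γ (Ae s (γ s)) (Set.Ici s) s := by
    intro s hs
    refine (hγd s ⟨hs.1, hs.2.le⟩).mono_of_mem_nhdsWithin ?_
    refine mem_nhdsWithin.mpr ⟨Set.Iio T, isOpen_Iio, hs.2, ?_⟩
    rintro y ⟨hy1, hy2⟩
    exact ⟨le_trans hs.1 hy2, le_of_lt hy1⟩
  have hAbound : ∀ s ∈ Set.Ico t T, ‖Ae s (γ s)‖ ≤ LA * ‖γ s‖ + C₁ := by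
    intro s _
    have h1 : ‖Ae s (γ s)‖ ≤ ‖Ae s 0‖ + ‖Ae s (γ s) - Ae s 0‖ := by
      have := norm_add_le (Ae s 0) (Ae s (γ s) - Ae s 0); simpa using this
    have h2 := hAelip s (γ s) 0
    have h3 : ‖γ s - 0‖ = ‖γ s‖ := by simp
    rw [h3] at h2
    linarith [hAe0 s]
  have hgr := norm_le_gronwallBound_of_norm_deriv_right_le (f' := fun s => Ae s (γ s))
    hγc hIci (le_of_eq (by rw [hγ0])) hAbound
  have hγb : ∀ s ∈ Set.Icc t T, ‖γ s‖ ≤ K₀ * (1 + ‖x‖) := by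
    intro s hs
    have h1 := hgr s hs
    rw [gronwallBound_of_K_ne_0 hLA.ne'] at h1
    have hst : 0 ≤ s - t := by linarith [hs.1]
    have hsT : s - t ≤ T := by linarith [hs.2, ht.1]
    have hexp : Real.exp (LA * (s - t)) ≤ Real.exp (LA * T) :=
      Real.exp_le_exp.mpr (by nlinarith)
    have hexp1 : (0:ℝ) < Real.exp (LA * (s - t)) := Real.exp_pos _
    have hCL : 0 ≤ C₁ / LA := by positivity
    calc ‖γ s‖ ≤ ‖x‖ * Real.exp (LA * (s - t)) + C₁ / LA * (Real.exp (LA * (s - t)) - 1) := h1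
    _ ≤ ‖x‖ * Real.exp (LA * T) + C₁ / LA * Real.exp (LA * T) := by
        have a1 : ‖x‖ * Real.exp (LA * (s - t)) ≤ ‖x‖ * Real.exp (LA * T) :=
          mul_le_mul_of_nonneg_left hexp (norm_nonneg x)
        have a2 : C₁ / LA * (Real.exp (LA * (s - t)) - 1) ≤ C₁ / LA * Real.exp (LA * T) :=
          mul_le_mul_of_nonneg_left (by linarith) hCL
        linarith
    _ = (‖x‖ + C₁ / LA) * Real.exp (LA * T) := by ring
    _ ≤ ((1 + C₁ / LA) * (1 + ‖x‖)) * Real.exp (LA * T) := by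
        have hE : (0:ℝ) < Real.exp (LA * T) := Real.exp_pos _
        have key : ‖x‖ + C₁ / LA ≤ (1 + C₁ / LA) * (1 + ‖x‖) := by
          nlinarith [mul_nonneg hCL (norm_nonneg x), norm_nonneg x]
        exact mul_le_mul_of_nonneg_right key hE.le
    _ = K₀ * (1 + ‖x‖) := by rw [hK₀]; ring
  -- integral identity
  refine ⟨γ, hγc, hγ0, ?_, hγb⟩
  intro s hs
  have hts : t ≤ s := hs.1
  have hcont' : ContinuousOn γ (Set.Icc t s) := hγc.mono (Set.Icc_subset_Icc_right hs.2)
  have hd' : ∀ u ∈ Set.Ioo t s, HasDerivWithinAt γ (Ae u (γ u)) (Set.Ioi u) u := by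
    intro u hu
    refine (hγd u ⟨hu.1.le, le_trans hu.2.le hs.2⟩).mono_of_mem_nhdsWithin ?_
    refine mem_nhdsWithin.mpr ⟨Set.Iio T, isOpen_Iio, lt_of_lt_of_le hu.2 hs.2, ?_⟩
    rintro y ⟨hy1, hy2⟩
    exact ⟨le_trans hu.1.le (le_of_lt hy2), le_of_lt hy1⟩
  have hint : IntervalIntegrable (fun u => Ae u (γ u)) volume t s := by
    apply ContinuousOn.intervalIntegrable
    rw [Set.uIcc_of_le hts]
    exact hAecont.comp_continuousOn ((continuousOn_id).prodMk hcont')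
  have heq := integral_eq_sub_of_hasDeriv_right_of_le hts hcont' hd' hint
  rw [hγ0] at heq
  have hAeA : ∫ u in t..s, Ae u (γ u) = ∫ u in t..s, A u (γ u) := by
    apply intervalIntegral.integral_congr
    intro u hu
    rw [Set.uIcc_of_le hts] at hu
    simp only [hAe, hcl_eq u ⟨hu.1, le_trans hu.2 hs.2⟩]
  rw [hAeA] at heq
  exact sub_eq_iff_eq_add'.mp heq.symm


/-- Lower bound for the cost of any admissible pair. -/
lemma cost_lower_aux {d r : ℕ} {T p : ℝ} (hT : 0 < T) (hp : 1 < p)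
    {ℓ : ℝ → (Fin r → ℝ) → (Fin d → ℝ) → ℝ} {g : (Fin d → ℝ) → ℝ}
    (hℓcont : ContinuousOn
      (fun q : ℝ × (Fin r → ℝ) × (Fin d → ℝ) => ℓ q.1 q.2.1 q.2.2)
      (Set.Icc 0 T ×ˢ (Set.univ : Set ((Fin r → ℝ) × (Fin d → ℝ)))))
    {Cl1 Cl2 Cl3 Cg1 : ℝ}
    (hCl1 : 0 < Cl1) (hCl2 : 0 < Cl2) (hCl3 : 0 < Cl3) (hCg1 : 0 < Cg1)
    (hl_lb : ∀ t ∈ Set.Icc 0 T, ∀ (a : Fin r → ℝ) (x : Fin d → ℝ),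
      Cl1 * ‖a‖ ^ p - Cl2 ≤ ℓ t a x)
    (hl_ub : ∀ t ∈ Set.Icc 0 T, ∀ (a : Fin r → ℝ) (x : Fin d → ℝ),
      ℓ t a x ≤ Cl3 * (1 + ‖a‖ ^ p + ‖x‖ ^ p))
    (hg_lb : ∀ x : Fin d → ℝ, -Cg1 ≤ g x)
    {t : ℝ} (ht : t ∈ Set.Icc 0 T)
    {α : ℝ → (Fin r → ℝ)} {γ : ℝ → (Fin d → ℝ)}
    (hα : Measurable α) (hαint : IntegrableOn (fun s => ‖α s‖ ^ p) (Set.Icc t T))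
    (hγc : ContinuousOn γ (Set.Icc t T)) :
    Cl1 * (∫ s in t..T, ‖α s‖ ^ p) - Cl2 * T - Cg1
      ≤ (∫ s in t..T, ℓ s (α s) (γ s)) + g (γ T) := by
  have htT : t ≤ T := ht.2
  have hp0 : (0:ℝ) < p := lt_trans one_pos hp
  -- the clamp function
  set cl : ℝ → ℝ := fun s => max 0 (min s T) with hcl
  have hclmem : ∀ s, cl s ∈ Set.Icc 0 T :=
    fun s => ⟨le_max_left _ _, max_le hT.le (min_le_right _ _)⟩
  have hcl_eq : ∀ s ∈ Set.Icc t T, cl s = s := by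
    intro s hs
    simp only [hcl]
    rw [min_eq_left hs.2, max_eq_right (le_trans ht.1 hs.1)]
  have hclcont : Continuous cl := continuous_const.max (continuous_id.min continuous_const)
  set ℓe : ℝ × (Fin r → ℝ) × (Fin d → ℝ) → ℝ := fun q => ℓ (cl q.1) q.2.1 q.2.2 with hℓe_def
  have hℓe : Continuous ℓe := by
    have : Continuous (fun q : ℝ × (Fin r → ℝ) × (Fin d → ℝ) => ((cl q.1, q.2) :
        ℝ × (Fin r → ℝ) × (Fin d → ℝ))) := (hclcont.comp continuous_fst).prodMk continuous_snd
    exact hℓcont.comp_continuous this (fun q => ⟨hclmem q.1, mem_univ _⟩)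
  -- measurability of the running cost
  set μ := volume.restrict (Set.Icc t T) with hμ
  have hγm : AEMeasurable γ μ := hγc.aemeasurable measurableSet_Icc
  have hm : AEMeasurable (fun s => ((s, α s, γ s) : ℝ × (Fin r → ℝ) × (Fin d → ℝ))) μ :=
    aemeasurable_id.prodMk (hα.aemeasurable.prodMk hγm)
  have hF : AEMeasurable (fun s => ℓ s (α s) (γ s)) μ := by
    have h1 : AEMeasurable (fun s => ℓe (s, α s, γ s)) μ := hℓe.measurable.comp_aemeasurable hm
    refine h1.congr ?_
    filter_upwards [ae_restrict_mem measurableSet_Icc] with s hs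
    simp only [hℓe_def, hcl_eq s hs]
  -- bound for γ
  obtain ⟨Mγ, hMγ⟩ := IsCompact.exists_bound_of_continuousOn isCompact_Icc hγc
  set M := max Mγ 0 with hM
  have hγb : ∀ s ∈ Set.Icc t T, ‖γ s‖ ^ p ≤ M ^ p := by
    intro s hs
    exact Real.rpow_le_rpow (norm_nonneg _) (le_trans (hMγ s hs) (le_max_left _ _)) hp0.le
  -- integrability of the running cost
  have hFint : IntegrableOn (fun s => ℓ s (α s) (γ s)) (Set.Icc t T) := by
    have hdom : Integrable (fun s => Cl3 * ‖α s‖ ^ p + (Cl3 * (1 + M ^ p) + Cl2)) μ :=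
      (hαint.const_mul Cl3).add (integrable_const _)
    refine Integrable.mono' hdom hF.aestronglyMeasurable ?_
    filter_upwards [ae_restrict_mem measurableSet_Icc] with s hs
    rw [Real.norm_eq_abs, abs_le]
    have hsI : s ∈ Set.Icc 0 T := ⟨le_trans ht.1 hs.1, hs.2⟩
    have hub := hl_ub s hsI (α s) (γ s)
    have hlb := hl_lb s hsI (α s) (γ s)
    have h1 : (0:ℝ) ≤ ‖α s‖ ^ p := Real.rpow_nonneg (norm_nonneg _) _
    have h2 := hγb s hs
    constructor
    · nlinarith [Real.rpow_nonneg (norm_nonneg (γ s)) p]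
    · nlinarith [Real.rpow_nonneg (norm_nonneg (γ s)) p]
  have hFii : IntervalIntegrable (fun s => ℓ s (α s) (γ s)) volume t T := by
    rw [intervalIntegrable_iff_integrableOn_Icc_of_le htT]; exact hFint
  have hαii : IntervalIntegrable (fun s => ‖α s‖ ^ p) volume t T := by
    rw [intervalIntegrable_iff_integrableOn_Icc_of_le htT]; exact hαint
  have hlowii : IntervalIntegrable (fun s => Cl1 * ‖α s‖ ^ p - Cl2) volume t T :=
    (hαii.const_mul Cl1).sub (intervalIntegrable_const)
  have hmono : (∫ s in t..T, (Cl1 * ‖α s‖ ^ p - Cl2)) ≤ ∫ s in t..T, ℓ s (α s) (γ s) := by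
    refine integral_mono_on htT hlowii hFii ?_
    intro s hs
    exact hl_lb s ⟨le_trans ht.1 hs.1, hs.2⟩ (α s) (γ s)
  have hcalc : (∫ s in t..T, (Cl1 * ‖α s‖ ^ p - Cl2))
      = Cl1 * (∫ s in t..T, ‖α s‖ ^ p) - Cl2 * (T - t) := by
    rw [intervalIntegral.integral_sub (hαii.const_mul Cl1) intervalIntegrable_const,
      intervalIntegral.integral_const_mul, intervalIntegral.integral_const, smul_eq_mul,
      mul_comm]
    ring
  have hg1 := hg_lb (γ T)
  have ht0 : 0 ≤ t := ht.1
  nlinarith [hmono, hcalc]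


set_option maxHeartbeats 1000000

/-- there is `C̃ > 0` (independent of `t` and `x`) such that every optimal
control satisfies `‖α*‖_{L^p(t,T)} ≤ C̃ (1 + |x|)`. -/
theorem statement7
    (d r : ℕ) (hd : 1 ≤ d) (hr : 1 ≤ r)
    (T : ℝ) (hT : 0 < T) (p : ℝ) (hp : 1 < p)
    (A : ℝ → (Fin d → ℝ) → (Fin d → ℝ)) (B : ℝ → ((Fin r → ℝ) →L[ℝ] (Fin d → ℝ)))
    (hAcont : ContinuousOn (fun q : ℝ × (Fin d → ℝ) => A q.1 q.2) (Set.Icc 0 T ×ˢ Set.univ))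
    (LA : ℝ) (hLA : 0 < LA)
    (hALip : ∀ t ∈ Set.Icc 0 T, ∀ x y : Fin d → ℝ, ‖A t x - A t y‖ ≤ LA * ‖x - y‖)
    (hBcont : ContinuousOn B (Set.Icc 0 T))
    (ℓ : ℝ → (Fin r → ℝ) → (Fin d → ℝ) → ℝ) (g : (Fin d → ℝ) → ℝ)
    (hℓcont : ContinuousOn
      (fun q : ℝ × (Fin r → ℝ) × (Fin d → ℝ) => ℓ q.1 q.2.1 q.2.2)
      (Set.Icc 0 T ×ˢ (Set.univ : Set ((Fin r → ℝ) × (Fin d → ℝ)))))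
    (hgcont : Continuous g)
    (Cl1 Cl2 Cl3 Cl4 Cg1 Cg2 Cg3 : ℝ)
    (hCl1 : 0 < Cl1) (hCl2 : 0 < Cl2) (hCl3 : 0 < Cl3) (hCl4 : 0 < Cl4)
    (hCg1 : 0 < Cg1) (hCg2 : 0 < Cg2) (hCg3 : 0 < Cg3)
    (hl_lb : ∀ t ∈ Set.Icc 0 T, ∀ (a : Fin r → ℝ) (x : Fin d → ℝ),
      Cl1 * ‖a‖ ^ p - Cl2 ≤ ℓ t a x)
    (hl_ub : ∀ t ∈ Set.Icc 0 T, ∀ (a : Fin r → ℝ) (x : Fin d → ℝ),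
      ℓ t a x ≤ Cl3 * (1 + ‖a‖ ^ p + ‖x‖ ^ p))
    (hl_lip : ∀ t ∈ Set.Icc 0 T, ∀ (a : Fin r → ℝ) (x y : Fin d → ℝ),
      |ℓ t a x - ℓ t a y| ≤ Cl4 * (1 + ‖x‖ ^ (p - 1) + ‖y‖ ^ (p - 1) + ‖a‖ ^ (p - 1)) * ‖x - y‖)
    (hg_lb : ∀ x : Fin d → ℝ, -Cg1 ≤ g x)
    (hg_ub : ∀ x : Fin d → ℝ, g x ≤ Cg2 * (1 + ‖x‖ ^ p))
    (hg_lip : ∀ x y : Fin d → ℝ, |g x - g y| ≤ Cg3 * (1 + ‖x‖ ^ (p - 1) + ‖y‖ ^ (p - 1)) * ‖x - y‖) :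
    ∃ Ct : ℝ, 0 < Ct ∧ ∀ t ∈ Set.Icc 0 T, ∀ (x : Fin d → ℝ)
      (α : ℝ → (Fin r → ℝ)) (γ : ℝ → (Fin d → ℝ)),
      IsControl r p T t α → IsTrajectory d r T A B t x α γ →
      (∫ s in t..T, ℓ s (α s) (γ s)) + g (γ T) = value d r T p A B ℓ g t x →
      (∫ s in t..T, ‖α s‖ ^ p) ^ (1 / p) ≤ Ct * (1 + ‖x‖) := by

  have hp0 : (0:ℝ) < p := lt_trans one_pos hp
  obtain ⟨K₀, hK₀, hexist⟩ := exists_zero_trajectory hT hAcont hLA hALip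
  have hKp : (0:ℝ) ≤ K₀ ^ p := Real.rpow_nonneg hK₀.le _
  set D0 : ℝ := (T * Cl3 + Cg2) * (1 + K₀ ^ p) + Cl2 * T + Cg1 with hD0
  have hD0pos : 0 < D0 := by
    have h1 : 0 < T * Cl3 + Cg2 := by nlinarith
    have h2 : (0:ℝ) < 1 + K₀ ^ p := by linarith
    have h3 := mul_pos h1 h2
    have h4 := mul_pos hCl2 hT
    rw [hD0]; nlinarith
  refine ⟨(D0 / Cl1) ^ (1/p), Real.rpow_pos_of_pos (by positivity) _, ?_⟩
  intro t ht x α γ hαC hγT hopt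
  have htT : t ≤ T := ht.2
  obtain ⟨γ0, hγ0c, hγ0t, hγ0eq, hγ0b⟩ := hexist t ht x
  set M : ℝ := K₀ * (1 + ‖x‖) with hM
  have hM0 : 0 ≤ M := by positivity
  have hMp0 : 0 ≤ M ^ p := Real.rpow_nonneg hM0 _
  -- the zero control is admissible
  set α0 : ℝ → (Fin r → ℝ) := fun _ => 0 with hα0
  have hα0C : IsControl r p T t α0 := by
    constructor
    · exact measurable_const
    · have hz : (fun s => ‖α0 s‖ ^ p) = fun _ => (0:ℝ) := by
        funext s; simp [hα0, Real.zero_rpow hp0.ne']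
      rw [hz]
      exact integrableOn_zero
  have hγ0T : IsTrajectory d r T A B t x α0 γ0 := by
    refine ⟨hγ0c, ?_⟩
    intro s hs
    rw [hγ0eq s hs]
    congr 1
    apply intervalIntegral.integral_congr
    intro u _
    simp [hα0]
  have hc0mem : ((∫ s in t..T, ℓ s (α0 s) (γ0 s)) + g (γ0 T)) ∈ CostSet d r T p A B ℓ g t x :=
    ⟨α0, γ0, hα0C, hγ0T, rfl⟩
  -- the cost set is bounded below
  have hbdd : BddBelow (CostSet d r T p A B ℓ g t x) := by
    refine ⟨-Cl2 * T - Cg1, ?_⟩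
    rintro c ⟨α', γ', hα', hγ', rfl⟩
    have hlow := cost_lower_aux hT hp hℓcont hCl1 hCl2 hCl3 hCg1 hl_lb hl_ub hg_lb ht
      hα'.1 hα'.2 hγ'.1
    have hnn : 0 ≤ ∫ s in t..T, ‖α' s‖ ^ p :=
      intervalIntegral.integral_nonneg htT (fun u _ => Real.rpow_nonneg (norm_nonneg _) _)
    nlinarith
  -- the optimal cost is at most the zero-control cost
  have hJle : (∫ s in t..T, ℓ s (α s) (γ s)) + g (γ T)
      ≤ (∫ s in t..T, ℓ s (α0 s) (γ0 s)) + g (γ0 T) := by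
    rw [hopt]; exact csInf_le hbdd hc0mem
  -- continuity of the zero-control running cost (via clamping)
  set cl : ℝ → ℝ := fun s => max 0 (min s T) with hcl
  have hclmem : ∀ s, cl s ∈ Set.Icc 0 T :=
    fun s => ⟨le_max_left _ _, max_le hT.le (min_le_right _ _)⟩
  have hcl_eq : ∀ s ∈ Set.Icc t T, cl s = s := by
    intro s hs
    simp only [hcl]
    rw [min_eq_left hs.2, max_eq_right (le_trans ht.1 hs.1)]
  have hclcont : Continuous cl := continuous_const.max (continuous_id.min continuous_const)
  have hℓe : Continuous (fun q : ℝ × (Fin r → ℝ) × (Fin d → ℝ) => ℓ (cl q.1) q.2.1 q.2.2) := by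
    have hinner : Continuous (fun q : ℝ × (Fin r → ℝ) × (Fin d → ℝ) => ((cl q.1, q.2) :
        ℝ × (Fin r → ℝ) × (Fin d → ℝ))) := (hclcont.comp continuous_fst).prodMk continuous_snd
    exact hℓcont.comp_continuous hinner (fun q => ⟨hclmem q.1, mem_univ _⟩)
  have hcontℓ0 : ContinuousOn (fun s => ℓ s (α0 s) (γ0 s)) (Set.Icc t T) := by
    have h1 : ContinuousOn (fun s => ℓ (cl s) (α0 s) (γ0 s)) (Set.Icc t T) := by
      exact hℓe.comp_continuousOn ((continuousOn_id).prodMk (continuousOn_const.prodMk hγ0c))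
    refine h1.congr ?_
    intro s hs
    simp only [hcl_eq s hs]
  -- upper bound for the zero-control cost
  have hub1 : (∫ s in t..T, ℓ s (α0 s) (γ0 s)) ≤ (T * Cl3) * (1 + M ^ p) := by
    have hii0 : IntervalIntegrable (fun s => ℓ s (α0 s) (γ0 s)) volume t T := by
      apply ContinuousOn.intervalIntegrable
      rw [Set.uIcc_of_le htT]
      exact hcontℓ0
    have hmono : (∫ s in t..T, ℓ s (α0 s) (γ0 s)) ≤ ∫ _ in t..T, Cl3 * (1 + M ^ p) := by
      refine integral_mono_on htT hii0 intervalIntegrable_const ?_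
      intro s hs
      have hub := hl_ub s ⟨le_trans ht.1 hs.1, hs.2⟩ (α0 s) (γ0 s)
      have hz : ‖α0 s‖ ^ p = 0 := by simp [hα0, Real.zero_rpow hp0.ne']
      have hγp : ‖γ0 s‖ ^ p ≤ M ^ p :=
        Real.rpow_le_rpow (norm_nonneg _) (hγ0b s hs) hp0.le
      rw [hz] at hub
      nlinarith
    rw [intervalIntegral.integral_const, smul_eq_mul] at hmono
    have hc : (0:ℝ) ≤ Cl3 * (1 + M ^ p) := by nlinarith
    have ht0 : 0 ≤ t := ht.1
    have hstep : (T - t) * (Cl3 * (1 + M ^ p)) ≤ T * (Cl3 * (1 + M ^ p)) :=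
      mul_le_mul_of_nonneg_right (by linarith) hc
    calc (∫ s in t..T, ℓ s (α0 s) (γ0 s)) ≤ (T - t) * (Cl3 * (1 + M ^ p)) := hmono
    _ ≤ T * (Cl3 * (1 + M ^ p)) := hstep
    _ = (T * Cl3) * (1 + M ^ p) := by ring
  have hub2 : g (γ0 T) ≤ Cg2 * (1 + M ^ p) := by
    have hub := hg_ub (γ0 T)
    have hγp : ‖γ0 T‖ ^ p ≤ M ^ p :=
      Real.rpow_le_rpow (norm_nonneg _) (hγ0b T ⟨htT, le_refl T⟩) hp0.le
    nlinarith
  -- lower bound for the optimal cost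
  have hlowopt := cost_lower_aux hT hp hℓcont hCl1 hCl2 hCl3 hCg1 hl_lb hl_ub hg_lb ht
    hαC.1 hαC.2 hγT.1
  set I : ℝ := ∫ s in t..T, ‖α s‖ ^ p with hIdef
  have hI0 : 0 ≤ I :=
    intervalIntegral.integral_nonneg htT (fun u _ => Real.rpow_nonneg (norm_nonneg _) _)
  -- combine the bounds
  have hy0 : (0:ℝ) < 1 + ‖x‖ := by positivity
  have hMpeq : M ^ p = K₀ ^ p * (1 + ‖x‖) ^ p := Real.mul_rpow hK₀.le hy0.le
  have hxp1 : (1:ℝ) ≤ (1 + ‖x‖) ^ p :=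
    Real.one_le_rpow (by linarith [norm_nonneg x]) hp0.le
  have hA1 : 1 + M ^ p ≤ (1 + K₀ ^ p) * (1 + ‖x‖) ^ p := by
    rw [hMpeq]; nlinarith
  have hA2 : Cl1 * I ≤ (T * Cl3 + Cg2) * (1 + M ^ p) + Cl2 * T + Cg1 := by
    nlinarith
  have hA3 : (0:ℝ) ≤ T * Cl3 + Cg2 := by positivity
  have hA4 : Cl1 * I ≤ ((T * Cl3 + Cg2) * (1 + K₀ ^ p)) * (1 + ‖x‖) ^ p + Cl2 * T + Cg1 := by
    have := mul_le_mul_of_nonneg_left hA1 hA3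
    nlinarith
  have hA5 : Cl2 * T + Cg1 ≤ (Cl2 * T + Cg1) * (1 + ‖x‖) ^ p := by
    have hpos : (0:ℝ) ≤ Cl2 * T + Cg1 := by nlinarith
    have h6 := mul_le_mul_of_nonneg_left hxp1 hpos
    linarith
  have hfinal : Cl1 * I ≤ D0 * (1 + ‖x‖) ^ p := by
    rw [hD0]; nlinarith
  have hIle : I ≤ D0 / Cl1 * (1 + ‖x‖) ^ p := by
    rw [div_mul_eq_mul_div, le_div_iff₀ hCl1]
    nlinarith
  calc I ^ (1/p) ≤ (D0 / Cl1 * (1 + ‖x‖) ^ p) ^ (1/p) :=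
        Real.rpow_le_rpow hI0 hIle (by positivity)
  _ = (D0 / Cl1) ^ (1/p) * ((1 + ‖x‖) ^ p) ^ (1/p) :=
        Real.mul_rpow (by positivity) (Real.rpow_nonneg hy0.le _)
  _ = (D0 / Cl1) ^ (1/p) * (1 + ‖x‖) := by
        rw [← Real.rpow_mul hy0.le, mul_one_div_cancel hp0.ne', Real.rpow_one]
end
end

section
/- Let t ∈ [0,T], x ∈ ℝ^d, and let (α_n)_{n∈ℕ} be a minimizing sequence for v(t,x), i.e. J^{t,x}(α_n) → v(t,x). Then the sequence (α_n) is bounded in L^p([t,T];ℝ^r): there is a constant K, depending only on T, p, the structural constants C_{ℓ,1}, C_{ℓ,2}, C_{ℓ,3}, C_{g,1}, C_{g,2}, C_A := max(sup_t|A(t,0)|, L_A), and |x|, such that sup_n ( ∫_t^T |α_n(s)|^p ds )^{1/p} ≤ K. -/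
open MeasureTheory Set intervalIntegral Filter

noncomputable section

/-- any minimizing sequence `(α_n)` for `v(t,x)` is bounded in
`L^p([t,T];ℝ^r)`. -/
theorem statement15
    (d r : ℕ) (hd : 1 ≤ d) (hr : 1 ≤ r)
    (T : ℝ) (hT : 0 < T) (p : ℝ) (hp : 1 < p)
    (A : ℝ → (Fin d → ℝ) → (Fin d → ℝ)) (B : ℝ → ((Fin r → ℝ) →L[ℝ] (Fin d → ℝ)))
    (hAcont : ContinuousOn (fun q : ℝ × (Fin d → ℝ) => A q.1 q.2) (Set.Icc 0 T ×ˢ Set.univ))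
    (LA : ℝ) (hLA : 0 < LA)
    (hALip : ∀ t ∈ Set.Icc 0 T, ∀ x y : Fin d → ℝ, ‖A t x - A t y‖ ≤ LA * ‖x - y‖)
    (hBcont : ContinuousOn B (Set.Icc 0 T))
    (ℓ : ℝ → (Fin r → ℝ) → (Fin d → ℝ) → ℝ) (g : (Fin d → ℝ) → ℝ)
    (hℓcont : ContinuousOn
      (fun q : ℝ × (Fin r → ℝ) × (Fin d → ℝ) => ℓ q.1 q.2.1 q.2.2)
      (Set.Icc 0 T ×ˢ (Set.univ : Set ((Fin r → ℝ) × (Fin d → ℝ)))))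
    (hgcont : Continuous g)
    (Cl1 Cl2 Cl3 Cl4 Cg1 Cg2 Cg3 : ℝ)
    (hCl1 : 0 < Cl1) (hCl2 : 0 < Cl2) (hCl3 : 0 < Cl3) (hCl4 : 0 < Cl4)
    (hCg1 : 0 < Cg1) (hCg2 : 0 < Cg2) (hCg3 : 0 < Cg3)
    (hl_lb : ∀ t ∈ Set.Icc 0 T, ∀ (a : Fin r → ℝ) (x : Fin d → ℝ),
      Cl1 * ‖a‖ ^ p - Cl2 ≤ ℓ t a x)
    (hl_ub : ∀ t ∈ Set.Icc 0 T, ∀ (a : Fin r → ℝ) (x : Fin d → ℝ),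
      ℓ t a x ≤ Cl3 * (1 + ‖a‖ ^ p + ‖x‖ ^ p))
    (hl_lip : ∀ t ∈ Set.Icc 0 T, ∀ (a : Fin r → ℝ) (x y : Fin d → ℝ),
      |ℓ t a x - ℓ t a y| ≤ Cl4 * (1 + ‖x‖ ^ (p - 1) + ‖y‖ ^ (p - 1) + ‖a‖ ^ (p - 1)) * ‖x - y‖)
    (hg_lb : ∀ x : Fin d → ℝ, -Cg1 ≤ g x)
    (hg_ub : ∀ x : Fin d → ℝ, g x ≤ Cg2 * (1 + ‖x‖ ^ p))
    (hg_lip : ∀ x y : Fin d → ℝ, |g x - g y| ≤ Cg3 * (1 + ‖x‖ ^ (p - 1) + ‖y‖ ^ (p - 1)) * ‖x - y‖)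
    (t : ℝ) (ht : t ∈ Set.Icc 0 T) (x : Fin d → ℝ)
    (α : ℕ → ℝ → (Fin r → ℝ)) (γ : ℕ → ℝ → (Fin d → ℝ))
    (hα : ∀ n, IsControl r p T t (α n))
    (hγ : ∀ n, IsTrajectory d r T A B t x (α n) (γ n))
    (hmin : Tendsto (fun n => (∫ s in t..T, ℓ s (α n s) (γ n s)) + g (γ n T)) atTop
      (nhds (value d r T p A B ℓ g t x))) :
    ∃ K : ℝ, ∀ n, (∫ s in t..T, ‖α n s‖ ^ p) ^ (1 / p) ≤ K := by
  have htT : t ≤ T := ht.2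
  have hsub : Set.Icc t T ⊆ Set.Icc 0 T := Set.Icc_subset_Icc ht.1 le_rfl
  have hp0 : (0:ℝ) ≤ p := le_of_lt (lt_trans one_pos hp)
  obtain ⟨M, hM⟩ := hmin.bddAbove_range
  set M' := M + Cg1 + Cl2 * (T - t) with hM'def
  refine ⟨(max 0 (M' / Cl1)) ^ (1/p), fun n => ?_⟩
  obtain ⟨hαm, hαint⟩ := hα n
  obtain ⟨hγc, -⟩ := hγ n
  have hIccM : MeasurableSet (Set.Icc t T) := measurableSet_Icc
  have hvol : volume (Set.Icc t T) < ⊤ := measure_Icc_lt_top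
  -- integrability of lower bound
  have hαII : IntervalIntegrable (fun s => ‖α n s‖ ^ p) volume t T := by
    apply IntegrableOn.intervalIntegrable
    rwa [Set.uIcc_of_le htT]
  have hlowII : IntervalIntegrable (fun s => Cl1 * ‖α n s‖ ^ p - Cl2) volume t T := by
    apply IntegrableOn.intervalIntegrable
    rw [Set.uIcc_of_le htT]
    exact (hαint.const_mul Cl1).sub (integrableOn_const hvol.ne)
  -- measurability of the running cost along trajectories
  have hγae : AEMeasurable (γ n) (volume.restrict (Set.Icc t T)) := hγc.aemeasurable hIccM
  have htriple : AEMeasurable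
      (fun s => ((s, α n s, γ n s) : ℝ × (Fin r → ℝ) × (Fin d → ℝ)))
      (volume.restrict (Set.Icc t T)) :=
    measurable_id.aemeasurable.prodMk (hαm.aemeasurable.prodMk hγae)
  set ℓ' : ℝ × (Fin r → ℝ) × (Fin d → ℝ) → ℝ :=
    fun q => ℓ (max 0 (min q.1 T)) q.2.1 q.2.2 with hℓ'def
  have hclamp : Continuous (fun s : ℝ => max 0 (min s T)) :=
    continuous_const.max (continuous_id.min continuous_const)
  have hℓ'cont : Continuous ℓ' := by
    rw [← continuousOn_univ]
    have hmap : Set.MapsTo (fun q : ℝ × (Fin r → ℝ) × (Fin d → ℝ) =>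
        ((max 0 (min q.1 T), q.2) : ℝ × (Fin r → ℝ) × (Fin d → ℝ))) Set.univ
        (Set.Icc 0 T ×ˢ (Set.univ : Set ((Fin r → ℝ) × (Fin d → ℝ)))) := by
      intro q _
      exact ⟨⟨le_max_left _ _, max_le hT.le (min_le_right _ _)⟩, Set.mem_univ _⟩
    exact hℓcont.comp ((hclamp.comp continuous_fst).prodMk continuous_snd).continuousOn hmap
  have hmemae : ∀ᵐ s ∂(volume.restrict (Set.Icc t T)), s ∈ Set.Icc t T :=
    ae_restrict_mem hIccM
  have hφaesm : AEStronglyMeasurable (fun s => ℓ s (α n s) (γ n s))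
      (volume.restrict (Set.Icc t T)) := by
    have h1 : AEMeasurable (fun s => ℓ' (s, α n s, γ n s)) (volume.restrict (Set.Icc t T)) :=
      hℓ'cont.measurable.comp_aemeasurable htriple
    refine h1.aestronglyMeasurable.congr ?_
    filter_upwards [hmemae] with s hs
    have hs0 : (0:ℝ) ≤ s := (hsub hs).1
    have hsT : s ≤ T := hs.2
    simp only [hℓ'def, min_eq_left hsT, max_eq_right hs0]
  -- dominating function
  have hγp_cont : ContinuousOn (fun s => ‖γ n s‖ ^ p) (Set.Icc t T) :=
    (hγc.norm).rpow_const (fun s _ => Or.inr hp0)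
  have hγp_int : IntegrableOn (fun s => ‖γ n s‖ ^ p) (Set.Icc t T) :=
    hγp_cont.integrableOn_compact isCompact_Icc
  have hG_int : IntegrableOn
      (fun s => Cl2 + Cl3 * (1 + ‖α n s‖ ^ p + ‖γ n s‖ ^ p)) (Set.Icc t T) := by
    refine (integrableOn_const hvol.ne).add ?_
    exact (((integrableOn_const hvol.ne).add hαint).add hγp_int).const_mul Cl3
  have hφ_int : IntegrableOn (fun s => ℓ s (α n s) (γ n s)) (Set.Icc t T) := by
    refine Integrable.mono' hG_int hφaesm ?_
    filter_upwards [hmemae] with s hs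
    have hs' : s ∈ Set.Icc 0 T := hsub hs
    have hαnn : (0:ℝ) ≤ ‖α n s‖ ^ p := Real.rpow_nonneg (norm_nonneg _) p
    have hγnn : (0:ℝ) ≤ ‖γ n s‖ ^ p := Real.rpow_nonneg (norm_nonneg _) p
    rw [Real.norm_eq_abs, abs_le]
    constructor
    · have := hl_lb s hs' (α n s) (γ n s)
      nlinarith [mul_nonneg hCl1.le hαnn]
    · have := hl_ub s hs' (α n s) (γ n s)
      nlinarith
  have hφII : IntervalIntegrable (fun s => ℓ s (α n s) (γ n s)) volume t T := by
    apply IntegrableOn.intervalIntegrable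
    rwa [Set.uIcc_of_le htT]
  -- key lower bound on the cost integral
  have key : Cl1 * (∫ s in t..T, ‖α n s‖ ^ p) - Cl2 * (T - t)
      ≤ ∫ s in t..T, ℓ s (α n s) (γ n s) := by
    have hmono := intervalIntegral.integral_mono_on htT hlowII hφII
      (fun s hs => hl_lb s (hsub hs) (α n s) (γ n s))
    have hsplit : (∫ s in t..T, (Cl1 * ‖α n s‖ ^ p - Cl2))
        = Cl1 * (∫ s in t..T, ‖α n s‖ ^ p) - Cl2 * (T - t) := by
      rw [intervalIntegral.integral_sub (hαII.const_mul Cl1) intervalIntegrable_const,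
        intervalIntegral.integral_const_mul, intervalIntegral.integral_const,
        smul_eq_mul]
      ring
    linarith [hmono, hsplit.symm.le, hsplit.le]
  -- conclude
  have hJ : (∫ s in t..T, ℓ s (α n s) (γ n s)) + g (γ n T) ≤ M :=
    hM (Set.mem_range_self n)
  have hg' := hg_lb (γ n T)
  have hint_nonneg : 0 ≤ ∫ s in t..T, ‖α n s‖ ^ p :=
    intervalIntegral.integral_nonneg htT (fun s _ => Real.rpow_nonneg (norm_nonneg _) p)
  have hbound : (∫ s in t..T, ‖α n s‖ ^ p) ≤ max 0 (M' / Cl1) := by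
    have h1 : Cl1 * (∫ s in t..T, ‖α n s‖ ^ p) ≤ M' := by
      rw [hM'def]; linarith
    have h2 : (∫ s in t..T, ‖α n s‖ ^ p) ≤ M' / Cl1 :=
      (le_div_iff₀' hCl1).2 h1
    exact h2.trans (le_max_right _ _)
  calc (∫ s in t..T, ‖α n s‖ ^ p) ^ (1/p)
      ≤ (max 0 (M' / Cl1)) ^ (1/p) :=
        Real.rpow_le_rpow hint_nonneg hbound (by positivity)
end
end
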